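/- In the Lie algebra m_{1,0} = (ℝ^8, μ_{1,0}) with bracket μ(e_1,e_j) = e_{j+1} for j = 2,…,7, μ(e_2,e_i) = e_{i+2} for i = 3,…,6, there exists an element x (e.g. x = e_3) with dim Im(ad_x) = 2, while in the Lie algebra (ℝ^8, μ_{t,1}) with μ(e_1,e_j)=e_{j+1} (j=2,…,7), μ(e_2,e_3)=t e_5, μ(e_2,e_4)=t e_6, μ(e_2,e_5)=(t−1)e_7, μ(e_2,e_6)=(t−2)e_8, μ(e_3,e_4)=e_7, μ(e_3,e_5)=e_8, no element of the form x = c_1 e_1 + c_2 e_2 + c_3 e_3 has dim Im(ad_x) = 2 unless the corresponding element in m_{1,0} also fails; consequently μ_{t,1} is not isomorphic to μ_{1,0} for any t ∈ ℝ. -/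

import Mathlib

set_option maxHeartbeats 2000000

noncomputable section

def e (k : ℕ) : Fin 8 → ℝ := fun m => if (m : ℕ) = k then 1 else 0

/-- Structure constants of `μ_{t,1}` for `i < j` (0-based indices). -/
def cplus (t : ℝ) (i j : ℕ) : Fin 8 → ℝ :=
  if i = 0 ∧ 1 ≤ j ∧ j ≤ 6 then e (j + 1)
  else if i = 1 ∧ j = 2 then t • e 4
  else if i = 1 ∧ j = 3 then t • e 5
  else if i = 1 ∧ j = 4 then (t - 1) • e 6
  else if i = 1 ∧ j = 5 then (t - 2) • e 7
  else if i = 2 ∧ j = 3 then e 6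
  else if i = 2 ∧ j = 4 then e 7
  else 0

def cst (t : ℝ) (i j : ℕ) : Fin 8 → ℝ :=
  if i < j then cplus t i j else if j < i then -cplus t j i else 0

/-- The bracket `μ_{t,1}`. -/
def mu (t : ℝ) (x y : Fin 8 → ℝ) : Fin 8 → ℝ :=
  fun k => ∑ i : Fin 8, ∑ j : Fin 8, x i * y j * cst t (i : ℕ) (j : ℕ) k

/-- Structure constants of `μ_{1,0}` (the algebra `m₂(8)`) for `i < j`. -/
def cplus10 (i j : ℕ) : Fin 8 → ℝ :=
  if i = 0 ∧ 1 ≤ j ∧ j ≤ 6 then e (j + 1)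
  else if i = 1 ∧ 2 ≤ j ∧ j ≤ 5 then e (j + 2)
  else 0

def cst10 (i j : ℕ) : Fin 8 → ℝ :=
  if i < j then cplus10 i j else if j < i then -cplus10 j i else 0

/-- The bracket `μ_{1,0}` of `m₂(8)`. -/
def mu10 (x y : Fin 8 → ℝ) : Fin 8 → ℝ :=
  fun k => ∑ i : Fin 8, ∑ j : Fin 8, x i * y j * cst10 (i : ℕ) (j : ℕ) k

/-- Dimension of the image of `ad_x` for the bracket `β`. -/
def adRank (β : (Fin 8 → ℝ) → (Fin 8 → ℝ) → (Fin 8 → ℝ)) (x : Fin 8 → ℝ) : ℕ :=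
  Module.finrank ℝ (Submodule.span ℝ (Set.range (fun y => β x y)))

/- ### Auxiliary lemmas -/

lemma fv0 : ((0:Fin 8):ℕ) = 0 := rfl
lemma fv1 : ((1:Fin 8):ℕ) = 1 := rfl
lemma fv2 : ((2:Fin 8):ℕ) = 2 := rfl
lemma fv3 : ((3:Fin 8):ℕ) = 3 := rfl
lemma fv4 : ((4:Fin 8):ℕ) = 4 := rfl
lemma fv5 : ((5:Fin 8):ℕ) = 5 := rfl
lemma fv6 : ((6:Fin 8):ℕ) = 6 := rfl
lemma fv7 : ((7:Fin 8):ℕ) = 7 := rfl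

section cols
variable (t : ℝ) (x y : Fin 8 → ℝ)

-- column values of ad_x for mu t
lemma c02 : mu t x (e 0) 2 = -x 1 := by
  simp (config := { decide := true }) [mu, cst, cplus, e, Fin.sum_univ_eight, fv0,fv1,fv2,fv3,fv4,fv5,fv6,fv7]
lemma c03 : mu t x (e 0) 3 = -x 2 := by
  simp (config := { decide := true }) [mu, cst, cplus, e, Fin.sum_univ_eight, fv0,fv1,fv2,fv3,fv4,fv5,fv6,fv7]
lemma c23 : mu t x (e 2) 3 = x 0 := by
  simp (config := { decide := true }) [mu, cst, cplus, e, Fin.sum_univ_eight, fv0,fv1,fv2,fv3,fv4,fv5,fv6,fv7]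
lemma c32 : mu t x (e 3) 2 = 0 := by
  simp (config := { decide := true }) [mu, cst, cplus, e, Fin.sum_univ_eight, fv0,fv1,fv2,fv3,fv4,fv5,fv6,fv7]
lemma c33 : mu t x (e 3) 3 = 0 := by
  simp (config := { decide := true }) [mu, cst, cplus, e, Fin.sum_univ_eight, fv0,fv1,fv2,fv3,fv4,fv5,fv6,fv7]
lemma c34 : mu t x (e 3) 4 = x 0 := by
  simp (config := { decide := true }) [mu, cst, cplus, e, Fin.sum_univ_eight, fv0,fv1,fv2,fv3,fv4,fv5,fv6,fv7]
lemma c35 : mu t x (e 3) 5 = x 1 * t := by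
  simp (config := { decide := true }) [mu, cst, cplus, e, Fin.sum_univ_eight, fv0,fv1,fv2,fv3,fv4,fv5,fv6,fv7]
lemma c36 : mu t x (e 3) 6 = x 2 := by
  simp (config := { decide := true }) [mu, cst, cplus, e, Fin.sum_univ_eight, fv0,fv1,fv2,fv3,fv4,fv5,fv6,fv7]
lemma c42 : mu t x (e 4) 2 = 0 := by
  simp (config := { decide := true }) [mu, cst, cplus, e, Fin.sum_univ_eight, fv0,fv1,fv2,fv3,fv4,fv5,fv6,fv7]
lemma c43 : mu t x (e 4) 3 = 0 := by
  simp (config := { decide := true }) [mu, cst, cplus, e, Fin.sum_univ_eight, fv0,fv1,fv2,fv3,fv4,fv5,fv6,fv7]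
lemma c44 : mu t x (e 4) 4 = 0 := by
  simp (config := { decide := true }) [mu, cst, cplus, e, Fin.sum_univ_eight, fv0,fv1,fv2,fv3,fv4,fv5,fv6,fv7]
lemma c45 : mu t x (e 4) 5 = x 0 := by
  simp (config := { decide := true }) [mu, cst, cplus, e, Fin.sum_univ_eight, fv0,fv1,fv2,fv3,fv4,fv5,fv6,fv7]
lemma c46 : mu t x (e 4) 6 = x 1 * (t - 1) := by
  simp (config := { decide := true }) [mu, cst, cplus, e, Fin.sum_univ_eight, fv0,fv1,fv2,fv3,fv4,fv5,fv6,fv7]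
lemma c47 : mu t x (e 4) 7 = x 2 := by
  simp (config := { decide := true }) [mu, cst, cplus, e, Fin.sum_univ_eight, fv0,fv1,fv2,fv3,fv4,fv5,fv6,fv7]
lemma c52 : mu t x (e 5) 2 = 0 := by
  simp (config := { decide := true }) [mu, cst, cplus, e, Fin.sum_univ_eight, fv0,fv1,fv2,fv3,fv4,fv5,fv6,fv7]
lemma c55 : mu t x (e 5) 5 = 0 := by
  simp (config := { decide := true }) [mu, cst, cplus, e, Fin.sum_univ_eight, fv0,fv1,fv2,fv3,fv4,fv5,fv6,fv7]
lemma c56 : mu t x (e 5) 6 = x 0 := by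
  simp (config := { decide := true }) [mu, cst, cplus, e, Fin.sum_univ_eight, fv0,fv1,fv2,fv3,fv4,fv5,fv6,fv7]
lemma c57 : mu t x (e 5) 7 = x 1 * (t - 2) := by
  simp (config := { decide := true }) [mu, cst, cplus, e, Fin.sum_univ_eight, fv0,fv1,fv2,fv3,fv4,fv5,fv6,fv7]

-- mu10 facts
lemma mu10_0 : mu10 x y 0 = 0 := by
  simp (config := { decide := true }) [mu10, cst10, cplus10, e, Fin.sum_univ_eight, fv0,fv1,fv2,fv3,fv4,fv5,fv6,fv7]
lemma mu10_1 : mu10 x y 1 = 0 := by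
  simp (config := { decide := true }) [mu10, cst10, cplus10, e, Fin.sum_univ_eight, fv0,fv1,fv2,fv3,fv4,fv5,fv6,fv7]
lemma mu10_2 : mu10 x y 2 = x 0 * y 1 - x 1 * y 0 := by
  simp (config := { decide := true }) [mu10, cst10, cplus10, e, Fin.sum_univ_eight, fv0,fv1,fv2,fv3,fv4,fv5,fv6,fv7]
  ring

lemma ad10 : mu10 (e 2) y = (-y 0) • e 3 + (-y 1) • e 4 := by
  funext k
  fin_cases k <;>
    simp (config := { decide := true }) [mu10, cst10, cplus10, e, Fin.sum_univ_eight, fv0,fv1,fv2,fv3,fv4,fv5,fv6,fv7]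

end cols

/-- Three linearly independent vectors in the range force rank ≥ 3. -/
lemma three_le {f : (Fin 8 → ℝ) → Fin 8 → ℝ} {a b c : Fin 8 → ℝ}
    (ha : a ∈ Set.range f) (hb : b ∈ Set.range f) (hc : c ∈ Set.range f)
    (k0 k1 k2 : Fin 8)
    (ha0 : a k0 ≠ 0) (hb0 : b k0 = 0) (hc0 : c k0 = 0)
    (hb1 : b k1 ≠ 0) (hc1 : c k1 = 0) (hc2 : c k2 ≠ 0) :
    3 ≤ Module.finrank ℝ (Submodule.span ℝ (Set.range f)) := by
  have li : LinearIndependent ℝ ![a, b, c] := by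
    rw [Fintype.linearIndependent_iff]
    intro g hg
    have hg' : g 0 • a + g 1 • b + g 2 • c = 0 := by
      simpa [Fin.sum_univ_three] using hg
    have h0 : g 0 = 0 := by
      have := congrFun hg' k0
      simp [hb0, hc0] at this
      rcases this with h | h
      · exact h
      · exact absurd h ha0
    have h1 : g 1 = 0 := by
      have := congrFun hg' k1
      simp [h0, hc1] at this
      rcases this with h | h
      · exact h
      · exact absurd h hb1
    have h2 : g 2 = 0 := by
      have := congrFun hg' k2
      simp [h0, h1] at this
      rcases this with h | h
      · exact h
      · exact absurd h hc2
    intro i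
    fin_cases i
    · exact h0
    · exact h1
    · exact h2
  have hle : Submodule.span ℝ (Set.range ![a, b, c]) ≤ Submodule.span ℝ (Set.range f) := by
    rw [Submodule.span_le]
    rintro v ⟨i, rfl⟩
    fin_cases i
    · exact Submodule.subset_span ha
    · exact Submodule.subset_span hb
    · exact Submodule.subset_span hc
  calc (3:ℕ) = Module.finrank ℝ (Submodule.span ℝ (Set.range ![a, b, c])) := by
        rw [finrank_span_eq_card li]; simp
    _ ≤ _ := Submodule.finrank_mono hle

/-- Any element of rank 2 in `μ_{t,1}` has vanishing first three coordinates. -/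
lemma rank2_zero (t : ℝ) (x : Fin 8 → ℝ) (h : adRank (mu t) x = 2) :
    x 0 = 0 ∧ x 1 = 0 ∧ x 2 = 0 := by
  have h3 : ¬ (3 ≤ adRank (mu t) x) := by omega
  have h0 : x 0 = 0 := by
    by_contra h0
    exact h3 (three_le (f := fun y => mu t x y)
      (a := mu t x (e 2)) (b := mu t x (e 3)) (c := mu t x (e 4))
      ⟨e 2, rfl⟩ ⟨e 3, rfl⟩ ⟨e 4, rfl⟩ 3 4 5
      (by rw [c23]; exact h0) (c33 t x) (c43 t x)
      (by rw [c34]; exact h0) (c44 t x)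
      (by rw [c45]; exact h0))
  have h1 : x 1 = 0 := by
    by_contra h1
    rcases eq_or_ne t 0 with ht | ht0
    · refine h3 (three_le (f := fun y => mu t x y)
        (a := mu t x (e 0)) (b := mu t x (e 4)) (c := mu t x (e 5))
        ⟨e 0, rfl⟩ ⟨e 4, rfl⟩ ⟨e 5, rfl⟩ 2 6 7
        (by rw [c02]; simpa using h1) (c42 t x) (c52 t x)
        (by rw [c46]; exact mul_ne_zero h1 (by rw [ht]; norm_num))
        (by rw [c56]; exact h0)
        (by rw [c57]; exact mul_ne_zero h1 (by rw [ht]; norm_num)))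
    · rcases eq_or_ne t 1 with ht | ht1
      · refine h3 (three_le (f := fun y => mu t x y)
          (a := mu t x (e 0)) (b := mu t x (e 3)) (c := mu t x (e 5))
          ⟨e 0, rfl⟩ ⟨e 3, rfl⟩ ⟨e 5, rfl⟩ 2 5 7
          (by rw [c02]; simpa using h1) (c32 t x) (c52 t x)
          (by rw [c35]; exact mul_ne_zero h1 ht0)
          (by rw [c55])
          (by rw [c57]; exact mul_ne_zero h1 (by rw [ht]; norm_num)))
      · refine h3 (three_le (f := fun y => mu t x y)
          (a := mu t x (e 0)) (b := mu t x (e 3)) (c := mu t x (e 4))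
          ⟨e 0, rfl⟩ ⟨e 3, rfl⟩ ⟨e 4, rfl⟩ 2 5 6
          (by rw [c02]; simpa using h1) (c32 t x) (c42 t x)
          (by rw [c35]; exact mul_ne_zero h1 ht0)
          (by rw [c45]; exact h0)
          (by rw [c46]; exact mul_ne_zero h1 (sub_ne_zero.2 ht1)))
  have h2 : x 2 = 0 := by
    by_contra h2
    exact h3 (three_le (f := fun y => mu t x y)
      (a := mu t x (e 0)) (b := mu t x (e 3)) (c := mu t x (e 4))
      ⟨e 0, rfl⟩ ⟨e 3, rfl⟩ ⟨e 4, rfl⟩ 3 6 7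
      (by rw [c03]; simpa using h2) (c33 t x) (c43 t x)
      (by rw [c36]; exact h2)
      (by rw [c46, h1]; ring)
      (by rw [c47]; exact h2))
  exact ⟨h0, h1, h2⟩

lemma rank10_e2 : adRank mu10 (e 2) = 2 := by
  unfold adRank
  have hcols : (fun y => mu10 (e 2) y) = fun y : Fin 8 → ℝ => (-y 0) • e 3 + (-y 1) • e 4 :=
    funext fun y => ad10 y
  rw [hcols]
  have li : LinearIndependent ℝ ![e 3, e 4] := by
    rw [LinearIndependent.pair_iff]
    intro s u hsu
    constructor
    · have := congrFun hsu 3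
      simpa [e, fv3, fv4] using this
    · have := congrFun hsu 4
      simpa [e, fv3, fv4] using this
  have hspan : Submodule.span ℝ (Set.range fun y : Fin 8 → ℝ => (-y 0) • e 3 + (-y 1) • e 4)
      = Submodule.span ℝ (Set.range ![e 3, e 4]) := by
    apply le_antisymm
    · rw [Submodule.span_le]
      rintro v ⟨u, rfl⟩
      exact Submodule.add_mem _
        (Submodule.smul_mem _ _ (Submodule.subset_span ⟨0, rfl⟩))
        (Submodule.smul_mem _ _ (Submodule.subset_span ⟨1, rfl⟩))
    · rw [Submodule.span_le]
      rintro v ⟨i, rfl⟩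
      fin_cases i
      · refine Submodule.subset_span ⟨-(e 0), ?_⟩
        funext k
        simp [e]
      · refine Submodule.subset_span ⟨-(e 1), ?_⟩
        funext k
        simp [e]
  rw [hspan, finrank_span_eq_card li]
  simp

lemma mu_zero (t : ℝ) : adRank (mu t) 0 = 0 := by
  unfold adRank
  have : (fun y => mu t 0 y) = fun _ : Fin 8 → ℝ => (0 : Fin 8 → ℝ) := by
    funext y k
    simp [mu]
  rw [this]
  simp [Set.range_const]

theorem stmt8 (t : ℝ) :
    (∃ x : Fin 8 → ℝ, adRank mu10 x = 2) ∧
    (∀ c₁ c₂ c₃ : ℝ, adRank (mu t) (c₁ • e 0 + c₂ • e 1 + c₃ • e 2) ≠ 2) ∧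
    ¬ ∃ g : (Fin 8 → ℝ) ≃ₗ[ℝ] (Fin 8 → ℝ), ∀ x y, g (mu t x y) = mu10 (g x) (g y) := by
  refine ⟨⟨e 2, rank10_e2⟩, ?_, ?_⟩
  · intro c₁ c₂ c₃ h
    set x := c₁ • e 0 + c₂ • e 1 + c₃ • e 2 with hx
    obtain ⟨h0, h1, h2⟩ := rank2_zero t x h
    have e0 : x 0 = c₁ := by simp [hx, e]
    have e1 : x 1 = c₂ := by simp [hx, e]
    have e2 : x 2 = c₃ := by simp [hx, e]
    have hx0 : x = 0 := by
      rw [hx]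
      rw [e0] at h0; rw [e1] at h1; rw [e2] at h2
      rw [h0, h1, h2]
      simp
    rw [hx0, mu_zero] at h
    exact absurd h (by norm_num)
  · rintro ⟨g, hg⟩
    set x := g.symm (e 2) with hxdef
    have hgx : g x = e 2 := g.apply_symm_apply _
    -- rank of x is 2
    have hrange : Set.range (fun y => mu10 (e 2) y) = ⇑g '' Set.range (fun y => mu t x y) := by
      ext v
      constructor
      · rintro ⟨u, rfl⟩
        refine ⟨mu t x (g.symm u), ⟨g.symm u, rfl⟩, ?_⟩
        rw [hg, hgx, g.apply_symm_apply]
      · rintro ⟨w, ⟨u, rfl⟩, rfl⟩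
        exact ⟨g u, by rw [hg, hgx]⟩
    have hrank : adRank (mu t) x = 2 := by
      have : adRank mu10 (e 2) = adRank (mu t) x := by
        unfold adRank
        rw [hrange, Submodule.span_image_linearEquiv]
        exact LinearEquiv.finrank_map_eq g _
      rw [← this, rank10_e2]
    obtain ⟨h0, h1, h2⟩ := rank2_zero t x hrank
    -- x is a double bracket
    set yv : Fin 8 → ℝ := x 3 • e 1 + x 4 • e 2 + x 5 • e 3 + x 6 • e 4 + x 7 • e 5 with hyv
    have hdouble : mu t (e 0) (mu t (e 0) yv) = x := by
      funext k
      fin_cases k <;>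
        simp (config := { decide := true }) [hyv, mu, cst, cplus, e, Fin.sum_univ_eight,
          fv0,fv1,fv2,fv3,fv4,fv5,fv6,fv7, h0, h1, h2]
    have : e 2 = mu10 (g (e 0)) (mu10 (g (e 0)) (g yv)) := by
      rw [← hgx, ← hdouble, hg, hg]
    have h2c := congrFun this 2
    rw [mu10_2, mu10_0, mu10_1] at h2c
    simp [e, fv2] at h2c

end
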